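/- If A and B are semigroups with zero and neither A nor B is semilattice indecomposable, then A ×₀ B is not semilattice indecomposable. More precisely, if P_A ⊂ A and P_B ⊂ B are proper completely prime ideals, then the image of (P_A × B) ∪ (A × P_B) in A ×₀ B is a proper completely prime ideal of A ×₀ B. -/

import Mathlib

/-- A semigroup is semilattice indecomposable if every semigroup homomorphism from it to a
semilattice (a commutative idempotent semigroup) is constant. -/
def SemilatticeIndecomposable (S : Type u) [Semigroup S] : Prop :=
  ∀ (T : Type u) [Semigroup T],
    (∀ a b : T, a * b = b * a) → (∀ a : T, a * a = a) →
      ∀ f : S →ₙ* T, ∀ x y : S, f x = f y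

/-- An ideal of a semigroup. -/
def IsIdeal {S : Type u} [Mul S] (I : Set S) : Prop :=
  I.Nonempty ∧ ∀ a ∈ I, ∀ s : S, s * a ∈ I ∧ a * s ∈ I

/-- An ideal is completely prime if its complement is closed under multiplication. -/
def IsCompletelyPrime {S : Type u} [Mul S] (I : Set S) : Prop :=
  ∀ a b : S, a ∉ I → b ∉ I → a * b ∉ I


universe u

def ZProd (A B : Type u) [Zero A] [Zero B] : Type u :=
  Option {p : A × B // p.1 ≠ 0 ∧ p.2 ≠ 0}

variable {A B : Type u} [SemigroupWithZero A] [SemigroupWithZero B]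

open Classical in
noncomputable def zmul : ZProd A B → ZProd A B → ZProd A B
  | some p, some q =>
      if h : p.val.1 * q.val.1 ≠ 0 ∧ p.val.2 * q.val.2 ≠ 0 then
        some ⟨(p.val.1 * q.val.1, p.val.2 * q.val.2), h⟩
      else none
  | _, _ => none

theorem zmul_none_left (x : ZProd A B) : zmul none x = none := by cases x <;> rfl
theorem zmul_none_right (x : ZProd A B) : zmul x none = none := by cases x <;> rfl

theorem zmul_assoc (x y z : ZProd A B) : zmul (zmul x y) z = zmul x (zmul y z) := by
  have hs : ∀ p q : {p : A × B // p.1 ≠ 0 ∧ p.2 ≠ 0}, zmul (some p) (some q) =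
      (open Classical in if h : p.val.1 * q.val.1 ≠ 0 ∧ p.val.2 * q.val.2 ≠ 0 then
        some ⟨(p.val.1 * q.val.1, p.val.2 * q.val.2), h⟩ else none) := fun _ _ => rfl
  have hl : ∀ x : Option {p : A × B // p.1 ≠ 0 ∧ p.2 ≠ 0}, zmul none x = none := zmul_none_left
  have hr : ∀ x : Option {p : A × B // p.1 ≠ 0 ∧ p.2 ≠ 0}, zmul x none = none := zmul_none_right
  rcases x with _ | p
  · rfl
  rcases y with _ | q
  · rfl
  rcases z with _ | r
  · exact (zmul_none_right _).trans
      ((congrArg (zmul (some p)) (zmul_none_right (some q))).trans (zmul_none_right _)).symm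
  by_cases h1 : p.val.1 * q.val.1 ≠ 0 ∧ p.val.2 * q.val.2 ≠ 0 <;>
    by_cases h2 : q.val.1 * r.val.1 ≠ 0 ∧ q.val.2 * r.val.2 ≠ 0
  · rw [hs p q, hs q r, dif_pos h1, dif_pos h2, hs, hs]
    split_ifs with h3 h4
    · exact Option.some_inj.mpr (Subtype.ext (by simp [mul_assoc]))
    · exact absurd ⟨by rw [← mul_assoc]; exact h3.1, by rw [← mul_assoc]; exact h3.2⟩ h4
    · exact absurd ⟨by rw [mul_assoc]; exact (by assumption : _ ∧ _).1,
        by rw [mul_assoc]; exact (by assumption : _ ∧ _).2⟩ h3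
    · rfl
  · rw [hs p q, hs q r, dif_pos h1, dif_neg h2, hr, hs]
    rw [dif_neg]
    rcases not_and_or.mp h2 with h2 | h2 <;> push_neg at h2 <;> intro h
    · exact h.1 (by rw [mul_assoc, h2, mul_zero])
    · exact h.2 (by rw [mul_assoc, h2, mul_zero])
  · rw [hs p q, hs q r, dif_neg h1, dif_pos h2, hl, hs]
    symm
    rw [dif_neg]
    rcases not_and_or.mp h1 with h1 | h1 <;> push_neg at h1 <;> intro h
    · exact h.1 (by rw [← mul_assoc, h1, zero_mul])
    · exact h.2 (by rw [← mul_assoc, h1, zero_mul])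
  · rw [hs p q, hs q r, dif_neg h1, dif_neg h2, hl, hr]

noncomputable instance : SemigroupWithZero (ZProd A B) where
  zero := none
  mul := zmul
  zero_mul := zmul_none_left
  mul_zero := zmul_none_right
  mul_assoc := zmul_assoc

open Classical in
/-- The canonical (Rees quotient) map `A × B → A ×₀ B`. -/
noncomputable def reesMap (p : A × B) : ZProd A B :=
  if h : p.1 ≠ 0 ∧ p.2 ≠ 0 then some ⟨p, h⟩ else none

open Classical in
theorem zmul_some_some (p q : {p : A × B // p.1 ≠ 0 ∧ p.2 ≠ 0}) :
    zmul (some p) (some q) =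
      if h : p.val.1 * q.val.1 ≠ 0 ∧ p.val.2 * q.val.2 ≠ 0 then
        some ⟨(p.val.1 * q.val.1, p.val.2 * q.val.2), h⟩
      else none := rfl

def SL2 : Type u := ULift Bool
def SL2.mk (b : Bool) : SL2 := ULift.up b
def SL2.val (x : SL2.{u}) : Bool := ULift.down x
instance : Semigroup SL2.{u} where
  mul a b := .mk (a.val || b.val)
  mul_assoc a b c := congrArg SL2.mk (Bool.or_assoc _ _ _)
theorem SL2.mul_def (a b : SL2.{u}) : a * b = .mk (a.val || b.val) := rfl
theorem SL2.mk_inj {a b : Bool} (h : SL2.mk.{u} a = SL2.mk b) : a = b :=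
  congrArg SL2.val h

theorem zmul_def (x y : ZProd A B) : x * y = zmul x y := rfl
theorem zzero_def : (0 : ZProd A B) = none := rfl

theorem mem_rees_iff (PA : Set A) (PB : Set B) (h0A : (0:A) ∈ PA) (h0B : (0:B) ∈ PB)
    (x : ZProd A B) :
    x ∈ reesMap '' ((PA ×ˢ (Set.univ : Set B)) ∪ ((Set.univ : Set A) ×ˢ PB)) ↔
      x = none ∨ ∃ p : {p : A × B // p.1 ≠ 0 ∧ p.2 ≠ 0}, x = some p ∧
        (p.val.1 ∈ PA ∨ p.val.2 ∈ PB) := by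
  constructor
  · rintro ⟨⟨a, b⟩, hab, rfl⟩
    unfold reesMap
    split_ifs with h
    · right
      refine ⟨⟨(a,b), h⟩, dif_pos h, ?_⟩
      rcases hab with h' | h'
      · exact Or.inl h'.1
      · exact Or.inr h'.2
    · exact Or.inl (dif_neg h)
  · rintro (rfl | ⟨p, rfl, hp⟩)
    · refine ⟨(0, 0), Or.inl ⟨h0A, trivial⟩, ?_⟩
      unfold reesMap
      refine dif_neg ?_
      simp
    · refine ⟨p.val, ?_, ?_⟩
      · rcases hp with h' | h'
        · exact Or.inl ⟨h', trivial⟩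
        · exact Or.inr ⟨trivial, h'⟩
      · unfold reesMap
        exact dif_pos p.prop

/-- If `P_A ⊂ A` and `P_B ⊂ B` are proper completely prime ideals, then the image of
`(P_A × B) ∪ (A × P_B)` in `A ×₀ B` is a proper completely prime ideal; in particular
`A ×₀ B` is not semilattice indecomposable. -/
theorem stmt_5 (PA : Set A) (PB : Set B)
    (hPA : IsIdeal PA) (hPA' : PA ≠ Set.univ) (hPA'' : IsCompletelyPrime PA)
    (hPB : IsIdeal PB) (hPB' : PB ≠ Set.univ) (hPB'' : IsCompletelyPrime PB) :
    (IsIdeal (reesMap '' ((PA ×ˢ (Set.univ : Set B)) ∪ ((Set.univ : Set A) ×ˢ PB))) ∧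
      reesMap '' ((PA ×ˢ (Set.univ : Set B)) ∪ ((Set.univ : Set A) ×ˢ PB)) ≠ Set.univ ∧
      IsCompletelyPrime (reesMap '' ((PA ×ˢ (Set.univ : Set B)) ∪ ((Set.univ : Set A) ×ˢ PB)))) ∧
    ¬ SemilatticeIndecomposable (ZProd A B) := by
  classical
  have h0A : (0:A) ∈ PA := by
    obtain ⟨a, ha⟩ := hPA.1
    have := (hPA.2 a ha 0).1
    rwa [zero_mul] at this
  have h0B : (0:B) ∈ PB := by
    obtain ⟨b, hb⟩ := hPB.1
    have := (hPB.2 b hb 0).1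
    rwa [zero_mul] at this
  set I := reesMap '' ((PA ×ˢ (Set.univ : Set B)) ∪ ((Set.univ : Set A) ×ˢ PB)) with hI
  have hmem := mem_rees_iff PA PB h0A h0B
  obtain ⟨a0, ha0⟩ : ∃ a : A, a ∉ PA := by
    by_contra h; push_neg at h; exact hPA' (Set.eq_univ_of_forall h)
  obtain ⟨b0, hb0⟩ : ∃ b : B, b ∉ PB := by
    by_contra h; push_neg at h; exact hPB' (Set.eq_univ_of_forall h)
  have ha0' : a0 ≠ 0 := fun h => ha0 (h ▸ h0A)
  have hb0' : b0 ≠ 0 := fun h => hb0 (h ▸ h0B)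
  have hnone : (none : ZProd A B) ∈ I := (hmem none).2 (Or.inl rfl)
  have hout : (some ⟨(a0, b0), ha0', hb0'⟩ : ZProd A B) ∉ I := by
    intro h
    rcases (hmem _).1 h with h | ⟨p, hp, hp'⟩
    · exact Option.some_ne_none _ h
    · obtain rfl : p = ⟨(a0, b0), ha0', hb0'⟩ := (Option.some_injective _ hp.symm)
      rcases hp' with h' | h'
      · exact ha0 h'
      · exact hb0 h'
  have hideal : IsIdeal I := by
    refine ⟨⟨none, hnone⟩, ?_⟩
    intro x hx s
    rcases (hmem x).1 hx with rfl | ⟨p, rfl, hp⟩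
    · rw [← zzero_def, mul_zero, zero_mul]
      exact ⟨hnone, hnone⟩
    · constructor
      · rcases s with _ | q
        · exact hnone
        · by_cases h : q.val.1 * p.val.1 ≠ 0 ∧ q.val.2 * p.val.2 ≠ 0
          · refine (congrArg (· ∈ I) ((zmul_some_some q p).trans (dif_pos h))).mpr ?_
            refine (hmem _).2 (Or.inr ⟨⟨_, h⟩, rfl, ?_⟩)
            rcases hp with h' | h'
            · exact Or.inl (hPA.2 _ h' _).1
            · exact Or.inr (hPB.2 _ h' _).1
          · exact (congrArg (· ∈ I) ((zmul_some_some q p).trans (dif_neg h))).mpr hnone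
      · rcases s with _ | q
        · exact hnone
        · by_cases h : p.val.1 * q.val.1 ≠ 0 ∧ p.val.2 * q.val.2 ≠ 0
          · refine (congrArg (· ∈ I) ((zmul_some_some p q).trans (dif_pos h))).mpr ?_
            refine (hmem _).2 (Or.inr ⟨⟨_, h⟩, rfl, ?_⟩)
            rcases hp with h' | h'
            · exact Or.inl (hPA.2 _ h' _).2
            · exact Or.inr (hPB.2 _ h' _).2
          · exact (congrArg (· ∈ I) ((zmul_some_some p q).trans (dif_neg h))).mpr hnone
  have hproper : I ≠ Set.univ := fun h => hout (h ▸ Set.mem_univ _)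
  have hcp : IsCompletelyPrime I := by
    intro x y hx hy hxy
    rcases x with _ | p
    · exact hx hnone
    rcases y with _ | q
    · exact hy hnone
    have hp1 : p.val.1 ∉ PA := fun h => hx ((hmem _).2 (Or.inr ⟨p, rfl, Or.inl h⟩))
    have hp2 : p.val.2 ∉ PB := fun h => hx ((hmem _).2 (Or.inr ⟨p, rfl, Or.inr h⟩))
    have hq1 : q.val.1 ∉ PA := fun h => hy ((hmem _).2 (Or.inr ⟨q, rfl, Or.inl h⟩))
    have hq2 : q.val.2 ∉ PB := fun h => hy ((hmem _).2 (Or.inr ⟨q, rfl, Or.inr h⟩))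
    have h1 := hPA'' _ _ hp1 hq1
    have h2 := hPB'' _ _ hp2 hq2
    have hne1 : p.val.1 * q.val.1 ≠ 0 := fun h => h1 (by rw [h]; exact h0A)
    have hne2 : p.val.2 * q.val.2 ≠ 0 := fun h => h2 (by rw [h]; exact h0B)
    replace hxy := (congrArg (· ∈ I) ((zmul_some_some p q).trans (dif_pos ⟨hne1, hne2⟩))).mp hxy
    rcases (hmem _).1 hxy with h | ⟨r, hr, hr'⟩
    · exact Option.some_ne_none _ h
    · obtain rfl : r = ⟨_, hne1, hne2⟩ := Option.some_injective _ hr.symm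
      rcases hr' with h' | h'
      · exact h1 h'
      · exact h2 h'
  refine ⟨⟨hideal, hproper, hcp⟩, ?_⟩
  intro hdec
  let f : ZProd A B →ₙ* SL2.{u} :=
    { toFun := fun x => .mk (decide (x ∈ I))
      map_mul' := fun x y => by
        rw [SL2.mul_def]
        refine congrArg SL2.mk ?_
        show decide (x * y ∈ I) = (decide (x ∈ I) || decide (y ∈ I))
        by_cases hx : x ∈ I
        · rw [decide_eq_true hx, Bool.true_or]
          exact decide_eq_true ((hideal.2 x hx y).2)
        · by_cases hy : y ∈ I
          · rw [decide_eq_true hy, Bool.or_true]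
            exact decide_eq_true ((hideal.2 y hy x).1)
          · rw [decide_eq_false hx, decide_eq_false hy, Bool.or_false]
            exact decide_eq_false (hcp x y hx hy) }
  have := hdec SL2.{u}
    (fun a b => congrArg SL2.mk (Bool.or_comm _ _))
    (fun a => by rw [SL2.mul_def, Bool.or_self]; rfl)
    f none (some ⟨(a0, b0), ha0', hb0'⟩)
  have hcalc : decide ((none : ZProd A B) ∈ I) =
      decide ((some ⟨(a0, b0), ha0', hb0'⟩ : ZProd A B) ∈ I) := SL2.mk_inj this
  rw [decide_eq_true hnone, decide_eq_false hout] at hcalc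
  exact Bool.noConfusion hcalc
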